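/- arXiv:1811.08077 — 2 statements merged into one kernel-verified Lean document; each statement's English description precedes it below -/
import Mathlib

section
/- Let T be a left linear track category in which every morphism satisfies p·x = 0 for a fixed prime p, with linearity tracks satisfying the linearity track equations. Then for any morphism a and any n divisible by p², the track Γ(n)_a : 0 ⇒ 0 equals the identity track id₀. -/
/-! A *left linear track category*: a track category (category enriched in groupoids)
whose hom-groupoids are abelian group objects in groupoids, with strictly left linear
composition (and pointed).  Tracks are encoded non-dependently, with source `src = δ₀`
and target `tgt = δ₁`; `vcomp α β` is the vertical composite `α □ β` (first `β`, then `α`);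
`wl a α = a ⊗ α` and `wr α x = α ⊗ x` are the whiskerings. -/
structure LLTrackCat (Obj : Type u) (Hom : Obj → Obj → Type v) (Trk : Obj → Obj → Type w)
    [∀ A B : Obj, AddCommGroup (Hom A B)] [∀ A B : Obj, AddCommGroup (Trk A B)] where
  src : ∀ {A B : Obj}, Trk A B → Hom A B
  tgt : ∀ {A B : Obj}, Trk A B → Hom A B
  vid : ∀ {A B : Obj}, Hom A B → Trk A B
  vcomp : ∀ {A B : Obj}, Trk A B → Trk A B → Trk A B
  vinv : ∀ {A B : Obj}, Trk A B → Trk A B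
  one : ∀ A : Obj, Hom A A
  comp : ∀ {A B C : Obj}, Hom B C → Hom A B → Hom A C
  wl : ∀ {A B C : Obj}, Hom B C → Trk A B → Trk A C
  wr : ∀ {A B C : Obj}, Trk B C → Hom A B → Trk A C
  -- each hom-groupoid is a groupoid
  src_vid : ∀ {A B : Obj} (x : Hom A B), src (vid x) = x
  tgt_vid : ∀ {A B : Obj} (x : Hom A B), tgt (vid x) = x
  src_vcomp : ∀ {A B : Obj} (α β : Trk A B), src α = tgt β → src (vcomp α β) = src β
  tgt_vcomp : ∀ {A B : Obj} (α β : Trk A B), src α = tgt β → tgt (vcomp α β) = tgt α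
  vcomp_assoc : ∀ {A B : Obj} (α β γ : Trk A B), src α = tgt β → src β = tgt γ →
    vcomp (vcomp α β) γ = vcomp α (vcomp β γ)
  vcomp_vid : ∀ {A B : Obj} (α : Trk A B), vcomp α (vid (src α)) = α
  vid_vcomp : ∀ {A B : Obj} (α : Trk A B), vcomp (vid (tgt α)) α = α
  src_vinv : ∀ {A B : Obj} (α : Trk A B), src (vinv α) = tgt α
  tgt_vinv : ∀ {A B : Obj} (α : Trk A B), tgt (vinv α) = src α
  vcomp_vinv : ∀ {A B : Obj} (α : Trk A B), vcomp α (vinv α) = vid (tgt α)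
  vinv_vcomp : ∀ {A B : Obj} (α : Trk A B), vcomp (vinv α) α = vid (src α)
  -- each hom-groupoid is an abelian group object: the structure maps are additive
  src_add : ∀ {A B : Obj} (α β : Trk A B), src (α + β) = src α + src β
  tgt_add : ∀ {A B : Obj} (α β : Trk A B), tgt (α + β) = tgt α + tgt β
  vid_add : ∀ {A B : Obj} (x y : Hom A B), vid (x + y) = vid x + vid y
  interchange : ∀ {A B : Obj} (α α' β β' : Trk A B), src α = tgt β → src α' = tgt β' →
    vcomp (α + α') (β + β') = vcomp α β + vcomp α' β'
  -- underlying category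
  comp_assoc : ∀ {A B C D : Obj} (a : Hom C D) (b : Hom B C) (c : Hom A B),
    comp (comp a b) c = comp a (comp b c)
  one_comp : ∀ {A B : Obj} (x : Hom A B), comp (one B) x = x
  comp_one : ∀ {A B : Obj} (x : Hom A B), comp x (one A) = x
  -- whiskering axioms
  src_wl : ∀ {A B C : Obj} (a : Hom B C) (α : Trk A B), src (wl a α) = comp a (src α)
  tgt_wl : ∀ {A B C : Obj} (a : Hom B C) (α : Trk A B), tgt (wl a α) = comp a (tgt α)
  src_wr : ∀ {A B C : Obj} (α : Trk B C) (x : Hom A B), src (wr α x) = comp (src α) x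
  tgt_wr : ∀ {A B C : Obj} (α : Trk B C) (x : Hom A B), tgt (wr α x) = comp (tgt α) x
  wl_vid : ∀ {A B C : Obj} (a : Hom B C) (x : Hom A B), wl a (vid x) = vid (comp a x)
  wr_vid : ∀ {A B C : Obj} (a : Hom B C) (x : Hom A B), wr (vid a) x = vid (comp a x)
  wl_vcomp : ∀ {A B C : Obj} (a : Hom B C) (α β : Trk A B), src α = tgt β →
    wl a (vcomp α β) = vcomp (wl a α) (wl a β)
  wr_vcomp : ∀ {A B C : Obj} (α β : Trk B C) (x : Hom A B), src α = tgt β →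
    wr (vcomp α β) x = vcomp (wr α x) (wr β x)
  wl_wl : ∀ {A B C D : Obj} (a : Hom C D) (b : Hom B C) (α : Trk A B),
    wl a (wl b α) = wl (comp a b) α
  wr_wr : ∀ {A B C D : Obj} (α : Trk C D) (x : Hom B C) (y : Hom A B),
    wr (wr α x) y = wr α (comp x y)
  wl_wr : ∀ {A B C D : Obj} (a : Hom C D) (α : Trk B C) (x : Hom A B),
    wr (wl a α) x = wl a (wr α x)
  wl_one : ∀ {A B : Obj} (α : Trk A B), wl (one B) α = α
  wr_one : ∀ {A B : Obj} (α : Trk A B), wr α (one A) = α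
  -- the two factorizations of the horizontal composite of two tracks agree
  htw : ∀ {A B C : Obj} (α : Trk B C) (β : Trk A B),
    vcomp (wr α (tgt β)) (wl (src α) β) = vcomp (wl (tgt α) β) (wr α (src β))
  -- composition is strictly left linear
  comp_add_left : ∀ {A B C : Obj} (a a' : Hom B C) (x : Hom A B),
    comp (a + a') x = comp a x + comp a' x
  wl_add_left : ∀ {A B C : Obj} (a a' : Hom B C) (α : Trk A B),
    wl (a + a') α = wl a α + wl a' α
  wr_add_left : ∀ {A B C : Obj} (α α' : Trk B C) (x : Hom A B),
    wr (α + α') x = wr α x + wr α' x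
  -- pointedness
  comp_zero : ∀ {A B C : Obj} (a : Hom B C), comp a (0 : Hom A B) = 0
  wl_zero : ∀ {A B C : Obj} (a : Hom B C), wl a (0 : Trk A B) = 0
  wr_zero : ∀ {A B C : Obj} (α : Trk B C), wr α (0 : Hom A B) = vid 0

/-- A system of linearity tracks `Γ a x y : a(x+y) ⇒ ax + ay` satisfying the
linearity track equations of Definition 3.3 (precomposition, postcomposition,
symmetry, left linearity, associativity, and naturality in both variables). -/
structure LinTracks {Obj : Type u} {Hom : Obj → Obj → Type v} {Trk : Obj → Obj → Type w}
    [∀ A B : Obj, AddCommGroup (Hom A B)] [∀ A B : Obj, AddCommGroup (Trk A B)]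
    (T : LLTrackCat Obj Hom Trk) where
  Γ : ∀ {X A B : Obj}, Hom A B → Hom X A → Hom X A → Trk X B
  src_Γ : ∀ {X A B : Obj} (a : Hom A B) (x y : Hom X A),
    T.src (Γ a x y) = T.comp a (x + y)
  tgt_Γ : ∀ {X A B : Obj} (a : Hom A B) (x y : Hom X A),
    T.tgt (Γ a x y) = T.comp a x + T.comp a y
  precomp : ∀ {Y X A B : Obj} (a : Hom A B) (x y : Hom X A) (z : Hom Y X),
    Γ a (T.comp x z) (T.comp y z) = T.wr (Γ a x y) z
  postcomp : ∀ {X A B C : Obj} (b : Hom B C) (a : Hom A B) (x y : Hom X A),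
    Γ (T.comp b a) x y = T.vcomp (Γ b (T.comp a x) (T.comp a y)) (T.wl b (Γ a x y))
  symm : ∀ {X A B : Obj} (a : Hom A B) (x y : Hom X A), Γ a x y = Γ a y x
  leftlin : ∀ {X A B : Obj} (a a' : Hom A B) (x y : Hom X A),
    Γ (a + a') x y = Γ a x y + Γ a' x y
  assocΓ : ∀ {X A B : Obj} (a : Hom A B) (x y z : Hom X A),
    T.vcomp (Γ a x y + T.vid (T.comp a z)) (Γ a (x + y) z)
      = T.vcomp (T.vid (T.comp a x) + Γ a y z) (Γ a x (y + z))
  natxy : ∀ {X A B : Obj} (a : Hom A B) (G H : Trk X A),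
    T.vcomp (T.wl a G + T.wl a H) (Γ a (T.src G) (T.src H))
      = T.vcomp (Γ a (T.tgt G) (T.tgt H)) (T.wl a (G + H))
  nata : ∀ {X A B : Obj} (α : Trk A B) (x y : Hom X A),
    T.vcomp (T.wr α x + T.wr α y) (Γ (T.src α) x y)
      = T.vcomp (Γ (T.tgt α) x y) (T.wr α (x + y))

/-- The iterated linearity track `Γ(n)_a = Γ_a^{1,…,1} : a(n·1) ⇒ n·a`
(with `n` copies of the identity), defined inductively by
`Γ_a^{x₁,…,xₙ} = (Γ_a^{x₁,…,x_{n-1}} + a xₙ) ∘ Γ_a^{x₁+⋯+x_{n-1},xₙ}`,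
with `Γ_a^{x₁} = id` (and `Γ(0)_a = id₀`). -/
def GN {Obj : Type u} {Hom : Obj → Obj → Type v} {Trk : Obj → Obj → Type w}
    [∀ A B : Obj, AddCommGroup (Hom A B)] [∀ A B : Obj, AddCommGroup (Trk A B)]
    (T : LLTrackCat Obj Hom Trk) (L : LinTracks T)
    {A B : Obj} (a : Hom A B) : ℕ → Trk A B
  | 0 => T.vid 0
  | 1 => T.vid a
  | (n + 2) =>
      T.vcomp (GN T L a (n + 1) + T.vid (T.comp a (T.one A)))
        (L.Γ a ((n + 1) • T.one A) (T.one A))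

section Aux

theorem aux_vid_zero {Obj : Type u} {Hom : Obj → Obj → Type v} {Trk : Obj → Obj → Type w}
    [∀ A B : Obj, AddCommGroup (Hom A B)] [∀ A B : Obj, AddCommGroup (Trk A B)]
    (T : LLTrackCat Obj Hom Trk) {A B : Obj} : T.vid (0 : Hom A B) = 0 := by
  have h := T.vid_add (0 : Hom A B) 0
  rw [add_zero] at h
  exact left_eq_add.mp h

theorem aux_wl_zero_left {Obj : Type u} {Hom : Obj → Obj → Type v} {Trk : Obj → Obj → Type w}
    [∀ A B : Obj, AddCommGroup (Hom A B)] [∀ A B : Obj, AddCommGroup (Trk A B)]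
    (T : LLTrackCat Obj Hom Trk) {A B C : Obj} (α : Trk A B) :
    T.wl (0 : Hom B C) α = 0 := by
  have h := T.wl_add_left (0 : Hom B C) 0 α
  rw [add_zero] at h
  exact left_eq_add.mp h

theorem aux_wl_nsmul {Obj : Type u} {Hom : Obj → Obj → Type v} {Trk : Obj → Obj → Type w}
    [∀ A B : Obj, AddCommGroup (Hom A B)] [∀ A B : Obj, AddCommGroup (Trk A B)]
    (T : LLTrackCat Obj Hom Trk) {A B C : Obj} (b : Hom B C) (α : Trk A B) :
    ∀ k : ℕ, T.wl (k • b) α = k • T.wl b α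
  | 0 => by rw [zero_smul, zero_smul, aux_wl_zero_left]
  | (k + 1) => by
      rw [succ_nsmul, succ_nsmul, T.wl_add_left, aux_wl_nsmul T b α k]

theorem aux_trk_tor {Obj : Type u} {Hom : Obj → Obj → Type v} {Trk : Obj → Obj → Type w}
    [∀ A B : Obj, AddCommGroup (Hom A B)] [∀ A B : Obj, AddCommGroup (Trk A B)]
    (T : LLTrackCat Obj Hom Trk) (p : ℕ)
    (htor : ∀ (A B : Obj) (x : Hom A B), p • x = 0)
    {A B : Obj} (α : Trk A B) : p • α = 0 := by
  have h := aux_wl_nsmul T (T.one B) α p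
  rw [htor, T.wl_one, aux_wl_zero_left] at h
  exact h.symm

theorem aux_Γ00 {Obj : Type u} {Hom : Obj → Obj → Type v} {Trk : Obj → Obj → Type w}
    [∀ A B : Obj, AddCommGroup (Hom A B)] [∀ A B : Obj, AddCommGroup (Trk A B)]
    (T : LLTrackCat Obj Hom Trk) (L : LinTracks T) {X A B : Obj} (a : Hom A B) :
    L.Γ a (0 : Hom X A) 0 = 0 := by
  have h := L.precomp a (0 : Hom X A) 0 (0 : Hom X X)
  rw [T.comp_zero, T.wr_zero, aux_vid_zero] at h
  exact h

theorem aux_Γx0 {Obj : Type u} {Hom : Obj → Obj → Type v} {Trk : Obj → Obj → Type w}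
    [∀ A B : Obj, AddCommGroup (Hom A B)] [∀ A B : Obj, AddCommGroup (Trk A B)]
    (T : LLTrackCat Obj Hom Trk) (L : LinTracks T) {X A B : Obj}
    (a : Hom A B) (x : Hom X A) :
    L.Γ a x 0 = T.vid (T.comp a x) := by
  have key := L.assocΓ a x 0 0
  simp only [T.comp_zero, aux_vid_zero T, aux_Γ00 T L, add_zero, zero_add] at key
  have htgt : T.tgt (L.Γ a x 0) = T.comp a x := by
    rw [L.tgt_Γ, T.comp_zero, add_zero]
  have hsrc : T.src (L.Γ a x 0) = T.comp a x := by
    rw [L.src_Γ, add_zero]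
  rw [← htgt, T.vid_vcomp] at key
  -- key : vcomp α α = α
  have h2 := congrArg (fun β => T.vcomp β (T.vinv (L.Γ a x 0))) key
  rw [T.vcomp_assoc _ _ _ (by rw [hsrc, htgt]) (by rw [T.tgt_vinv]),
    T.vcomp_vinv] at h2
  rw [htgt, ← hsrc, T.vcomp_vid] at h2
  rw [h2, hsrc]

theorem aux_src_GN {Obj : Type u} {Hom : Obj → Obj → Type v} {Trk : Obj → Obj → Type w}
    [∀ A B : Obj, AddCommGroup (Hom A B)] [∀ A B : Obj, AddCommGroup (Trk A B)]
    (T : LLTrackCat Obj Hom Trk) (L : LinTracks T) {A B : Obj} (a : Hom A B) :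
    ∀ n : ℕ, T.src (GN T L a n) = T.comp a (n • T.one A)
  | 0 => by simp only [GN, T.src_vid, zero_smul, T.comp_zero]
  | 1 => by simp only [GN, T.src_vid, one_smul, T.comp_one]
  | (n + 2) => by
      have h : T.src (GN T L a (n+1) + T.vid (T.comp a (T.one A)))
          = T.tgt (L.Γ a ((n+1) • T.one A) (T.one A)) := by
        rw [T.src_add, T.src_vid, aux_src_GN T L a (n+1), L.tgt_Γ]
      simp only [GN]
      rw [T.src_vcomp _ _ h, L.src_Γ,
        show (n+1) • T.one A + T.one A = (n+2) • T.one A from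
          (succ_nsmul (T.one A) (n+1)).symm]

theorem aux_tgt_GN {Obj : Type u} {Hom : Obj → Obj → Type v} {Trk : Obj → Obj → Type w}
    [∀ A B : Obj, AddCommGroup (Hom A B)] [∀ A B : Obj, AddCommGroup (Trk A B)]
    (T : LLTrackCat Obj Hom Trk) (L : LinTracks T) {A B : Obj} (a : Hom A B) :
    ∀ n : ℕ, T.tgt (GN T L a n) = n • a
  | 0 => by simp only [GN, T.tgt_vid, zero_smul]
  | 1 => by simp only [GN, T.tgt_vid, one_smul]
  | (n + 2) => by
      have h : T.src (GN T L a (n+1) + T.vid (T.comp a (T.one A)))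
          = T.tgt (L.Γ a ((n+1) • T.one A) (T.one A)) := by
        rw [T.src_add, T.src_vid, aux_src_GN T L a (n+1), L.tgt_Γ]
      simp only [GN]
      rw [T.tgt_vcomp _ _ h, T.tgt_add, T.tgt_vid, aux_tgt_GN T L a (n+1),
        T.comp_one, ← succ_nsmul]

theorem aux_GN_add {Obj : Type u} {Hom : Obj → Obj → Type v} {Trk : Obj → Obj → Type w}
    [∀ A B : Obj, AddCommGroup (Hom A B)] [∀ A B : Obj, AddCommGroup (Trk A B)]
    (T : LLTrackCat Obj Hom Trk) (L : LinTracks T) {A B : Obj} (a : Hom A B) :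
    ∀ m n : ℕ, GN T L a (m + n)
      = T.vcomp (GN T L a m + GN T L a n) (L.Γ a (m • T.one A) (n • T.one A))
  | m, 0 => by
      rw [Nat.add_zero, zero_smul, aux_Γx0 T L]
      rw [show GN T L a 0 = 0 from by simp only [GN, aux_vid_zero T]]
      rw [add_zero, ← aux_src_GN T L a m, T.vcomp_vid]
  | m, 1 => by
      cases m with
      | zero =>
          rw [Nat.zero_add, zero_smul, one_smul, L.symm, aux_Γx0 T L, T.comp_one]
          rw [show GN T L a 0 = 0 from by simp only [GN, aux_vid_zero T]]
          rw [zero_add]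
          simp only [GN]
          have h := T.vcomp_vid (T.vid a)
          rw [T.src_vid] at h
          exact h.symm
      | succ m =>
          simp only [GN, T.comp_one, one_smul]
  | m, (n + 2) => by
      have harith1 : m • T.one A + (n+1) • T.one A = (m+n+1) • T.one A :=
        (add_nsmul (T.one A) m (n+1)).symm
      have harith2 : (n+1) • T.one A + T.one A = (n+2) • T.one A :=
        (succ_nsmul (T.one A) (n+1)).symm
      have IH := aux_GN_add T L a m (n+1)
      rw [show m + (n+1) = m+n+1 from by omega] at IH
      have E1 : GN T L a (m + (n+2)) =
          T.vcomp (GN T L a (m+n+1) + T.vid a)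
            (L.Γ a ((m+n+1) • T.one A) (T.one A)) := by
        rw [show m + (n+2) = (m+n)+2 from by omega]
        simp only [GN, T.comp_one]
      have cX : T.src (GN T L a m + GN T L a (n+1))
          = T.tgt (L.Γ a (m • T.one A) ((n+1) • T.one A)) := by
        rw [T.src_add, aux_src_GN T L a m, aux_src_GN T L a (n+1), L.tgt_Γ]
      have cvid : T.src (T.vid a) = T.tgt (T.vid (a : Hom A B)) := by
        rw [T.src_vid, T.tgt_vid]
      have E3 : T.vcomp (GN T L a m + GN T L a (n+1))
            (L.Γ a (m • T.one A) ((n+1) • T.one A)) + T.vid a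
          = T.vcomp ((GN T L a m + GN T L a (n+1)) + T.vid a)
              (L.Γ a (m • T.one A) ((n+1) • T.one A) + T.vid a) := by
        rw [T.interchange _ _ _ _ cX cvid]
        congr 1
        have h := T.vcomp_vid (T.vid a)
        rw [T.src_vid] at h
        exact h.symm
      have c1 : T.src (GN T L a m + GN T L a (n+1) + T.vid a)
          = T.tgt (L.Γ a (m • T.one A) ((n+1) • T.one A) + T.vid a) := by
        rw [T.src_add, T.tgt_add, T.src_vid, T.tgt_vid, cX]
      have c2 : T.src (L.Γ a (m • T.one A) ((n+1) • T.one A) + T.vid a)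
          = T.tgt (L.Γ a ((m+n+1) • T.one A) (T.one A)) := by
        rw [T.src_add, T.src_vid, L.src_Γ, L.tgt_Γ, T.comp_one, harith1]
      have E5 := L.assocΓ a (m • T.one A) ((n+1) • T.one A) (T.one A)
      rw [T.comp_one, harith1, harith2] at E5
      have c3 : T.src (T.vid (T.comp a (m • T.one A))
              + L.Γ a ((n+1) • T.one A) (T.one A))
          = T.tgt (L.Γ a (m • T.one A) ((n+2) • T.one A)) := by
        rw [T.src_add, T.src_vid, L.src_Γ, L.tgt_Γ, harith2]
      have c4 : T.src (GN T L a m + (GN T L a (n+1) + T.vid a))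
          = T.tgt (T.vid (T.comp a (m • T.one A))
              + L.Γ a ((n+1) • T.one A) (T.one A)) := by
        simp only [T.src_add, T.tgt_add, T.src_vid, T.tgt_vid, L.tgt_Γ,
          T.comp_one, aux_src_GN T L a]
      have c5 : T.src (GN T L a m) = T.tgt (T.vid (T.comp a (m • T.one A))) := by
        rw [T.tgt_vid]; exact aux_src_GN T L a m
      have c6 : T.src (GN T L a (n+1) + T.vid a)
          = T.tgt (L.Γ a ((n+1) • T.one A) (T.one A)) := by
        rw [T.src_add, T.src_vid, aux_src_GN T L a (n+1), L.tgt_Γ, T.comp_one]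
      have E7 : T.vcomp (GN T L a m + (GN T L a (n+1) + T.vid a))
            (T.vid (T.comp a (m • T.one A)) + L.Γ a ((n+1) • T.one A) (T.one A))
          = GN T L a m + GN T L a (n+2) := by
        rw [T.interchange _ _ _ _ c5 c6]
        congr 1
        · conv_lhs => rw [show T.comp a (m • T.one A) = T.src (GN T L a m) from
            (aux_src_GN T L a m).symm]
          exact T.vcomp_vid _
        · simp only [GN, T.comp_one]
      calc GN T L a (m + (n+2))
          = T.vcomp (GN T L a (m+n+1) + T.vid a)
              (L.Γ a ((m+n+1) • T.one A) (T.one A)) := E1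
        _ = T.vcomp (T.vcomp (GN T L a m + GN T L a (n+1))
              (L.Γ a (m • T.one A) ((n+1) • T.one A)) + T.vid a)
              (L.Γ a ((m+n+1) • T.one A) (T.one A)) := by rw [IH]
        _ = T.vcomp (T.vcomp ((GN T L a m + GN T L a (n+1)) + T.vid a)
              (L.Γ a (m • T.one A) ((n+1) • T.one A) + T.vid a))
              (L.Γ a ((m+n+1) • T.one A) (T.one A)) := by rw [E3]
        _ = T.vcomp ((GN T L a m + GN T L a (n+1)) + T.vid a)
              (T.vcomp (L.Γ a (m • T.one A) ((n+1) • T.one A) + T.vid a)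
                (L.Γ a ((m+n+1) • T.one A) (T.one A))) :=
            T.vcomp_assoc _ _ _ c1 c2
        _ = T.vcomp (GN T L a m + (GN T L a (n+1) + T.vid a))
              (T.vcomp (T.vid (T.comp a (m • T.one A))
                  + L.Γ a ((n+1) • T.one A) (T.one A))
                (L.Γ a (m • T.one A) ((n+2) • T.one A))) := by
            rw [E5, add_assoc]
        _ = T.vcomp (T.vcomp (GN T L a m + (GN T L a (n+1) + T.vid a))
              (T.vid (T.comp a (m • T.one A))
                  + L.Γ a ((n+1) • T.one A) (T.one A)))
              (L.Γ a (m • T.one A) ((n+2) • T.one A)) :=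
            (T.vcomp_assoc _ _ _ c4 c3).symm
        _ = T.vcomp (GN T L a m + GN T L a (n+2))
              (L.Γ a (m • T.one A) ((n+2) • T.one A)) := by rw [E7]

theorem aux_GN_mul_p {Obj : Type u} {Hom : Obj → Obj → Type v} {Trk : Obj → Obj → Type w}
    [∀ A B : Obj, AddCommGroup (Hom A B)] [∀ A B : Obj, AddCommGroup (Trk A B)]
    (T : LLTrackCat Obj Hom Trk) (L : LinTracks T) (p : ℕ)
    (htor : ∀ (A B : Obj) (x : Hom A B), p • x = 0)
    {A B : Obj} (a : Hom A B) :
    ∀ k : ℕ, GN T L a (k * p) = k • GN T L a p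
  | 0 => by simp only [Nat.zero_mul, GN, aux_vid_zero T, zero_smul]
  | (k + 1) => by
      have h := aux_GN_add T L a (k*p) p
      have e0 : (k*p) • T.one A = (0 : Hom A A) := by
        rw [mul_nsmul, htor]
      have p0 : p • T.one A = (0 : Hom A A) := htor A A (T.one A)
      rw [e0, p0, aux_Γ00 T L] at h
      have hsrc : T.src (GN T L a (k*p) + GN T L a p) = (0 : Hom A B) := by
        rw [T.src_add, aux_src_GN T L a, aux_src_GN T L a, e0, p0,
          T.comp_zero, add_zero]
      rw [← aux_vid_zero T, ← hsrc, T.vcomp_vid] at h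
      rw [show (k+1)*p = k*p + p from by ring, h,
        aux_GN_mul_p T L p htor a k, succ_nsmul]

end Aux

/-- If every morphism of the left linear track category is
`p`-torsion (`p • x = 0`) for a prime `p`, then for any morphism `a` and any `n`
divisible by `p²`, the track `Γ(n)_a : 0 ⇒ 0` is the identity track `id₀`. -/
theorem stmt7 {Obj : Type u} {Hom : Obj → Obj → Type v} {Trk : Obj → Obj → Type w}
    [∀ A B : Obj, AddCommGroup (Hom A B)] [∀ A B : Obj, AddCommGroup (Trk A B)]
    (T : LLTrackCat Obj Hom Trk) (L : LinTracks T)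
    (p : ℕ) (hp : p.Prime) (htor : ∀ (A B : Obj) (x : Hom A B), p • x = 0)
    {A B : Obj} (a : Hom A B) (n : ℕ) (hn : p ^ 2 ∣ n) :
    GN T L a n = T.vid 0 := by
  obtain ⟨k, rfl⟩ := hn
  rw [show p^2*k = (p*k)*p from by ring, aux_GN_mul_p T L p htor a (p*k),
    mul_nsmul, aux_trk_tor T p htor, smul_zero, aux_vid_zero T]
end

section
/- Let T be a left linear track category with linearity tracks satisfying the linearity track equations, and for a morphism a define Γ(−1)_a := (Γ_a^{1,−1} − a)⁻¹, a track a(−1) ⇒ −a. Then for all m, n ∈ ℤ (allowing negatives), the addition formula Γ(m+n)_a = (Γ(m)_a + Γ(n)_a) ∘ Γ_a^{m,n} holds, where Γ(k)_a : a(k·1) ⇒ k·a denotes the k-fold linearity track extended to all integers via Γ(−m)_a := (−Γ(m)_a) ∘ (Γ(−1)_a ⊗ (m·1)) with the compatibility of Lemma on multiplying by negatives, Γ(0)_a := id₀, and Γ(1)_a := id_a. -/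
/-- The track `Γ(−1)_a := (Γ_a^{1,−1} − a)⁻¹ : a(−1) ⇒ −a`. -/
def Gneg1 {Obj : Type u} {Hom : Obj → Obj → Type v} {Trk : Obj → Obj → Type w}
    [∀ A B : Obj, AddCommGroup (Hom A B)] [∀ A B : Obj, AddCommGroup (Trk A B)]
    (T : LLTrackCat Obj Hom Trk) (L : LinTracks T)
    {A B : Obj} (a : Hom A B) : Trk A B :=
  T.vinv (L.Γ a (T.one A) (-(T.one A)) - T.vid a)

/-- `Γ(k)_a : a(k·1) ⇒ k·a` for all integers `k`: for `k ≥ 0` the iterated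
linearity track, and for `k = −m < 0` defined by
`Γ(−m)_a := (−Γ(m)_a) ∘ (Γ(−1)_a ⊗ (m·1))`. -/
def GZ {Obj : Type u} {Hom : Obj → Obj → Type v} {Trk : Obj → Obj → Type w}
    [∀ A B : Obj, AddCommGroup (Hom A B)] [∀ A B : Obj, AddCommGroup (Trk A B)]
    (T : LLTrackCat Obj Hom Trk) (L : LinTracks T)
    {A B : Obj} (a : Hom A B) (k : ℤ) : Trk A B :=
  if 0 ≤ k then GN T L a k.toNat
  else T.vcomp (-(GN T L a (-k).toNat)) (T.wr (Gneg1 T L a) ((-k).toNat • T.one A))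

section Stmt18Aux

universe u v w

variable {Obj : Type u} {Hom : Obj → Obj → Type v} {Trk : Obj → Obj → Type w}
    [∀ A B : Obj, AddCommGroup (Hom A B)] [∀ A B : Obj, AddCommGroup (Trk A B)]
    (T : LLTrackCat Obj Hom Trk) (L : LinTracks T)

/-- helper to use a hypothesis in abelian-group goals -/
private lemma sub_helper {G : Type*} [AddCommGroup G] {a b c d : G}
    (h : a = b) (h2 : c - d = a - b) : c = d := by
  rw [h, sub_self] at h2; exact sub_eq_zero.mp h2

lemma vid_zero {A B : Obj} : T.vid (0 : Hom A B) = 0 :=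
  (AddMonoidHom.mk' T.vid T.vid_add).map_zero

lemma vid_neg {A B : Obj} (x : Hom A B) : T.vid (-x) = -(T.vid x) :=
  (AddMonoidHom.mk' T.vid T.vid_add).map_neg x

lemma vid_sub {A B : Obj} (x y : Hom A B) : T.vid (x - y) = T.vid x - T.vid y :=
  (AddMonoidHom.mk' T.vid T.vid_add).map_sub x y

lemma src_zero {A B : Obj} : T.src (0 : Trk A B) = 0 :=
  (AddMonoidHom.mk' T.src T.src_add).map_zero

lemma src_neg {A B : Obj} (α : Trk A B) : T.src (-α) = -(T.src α) :=
  (AddMonoidHom.mk' T.src T.src_add).map_neg α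

lemma src_sub {A B : Obj} (α β : Trk A B) : T.src (α - β) = T.src α - T.src β :=
  (AddMonoidHom.mk' T.src T.src_add).map_sub α β

lemma tgt_zero {A B : Obj} : T.tgt (0 : Trk A B) = 0 :=
  (AddMonoidHom.mk' T.tgt T.tgt_add).map_zero

lemma tgt_neg {A B : Obj} (α : Trk A B) : T.tgt (-α) = -(T.tgt α) :=
  (AddMonoidHom.mk' T.tgt T.tgt_add).map_neg α

lemma tgt_sub {A B : Obj} (α β : Trk A B) : T.tgt (α - β) = T.tgt α - T.tgt β :=
  (AddMonoidHom.mk' T.tgt T.tgt_add).map_sub α β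

lemma comp_neg_left {A B C : Obj} (a : Hom B C) (x : Hom A B) :
    T.comp (-a) x = -(T.comp a x) :=
  (AddMonoidHom.mk' (fun b => T.comp b x) (fun b b' => T.comp_add_left b b' x)).map_neg a

lemma wr_sub_left {A B C : Obj} (α β : Trk B C) (x : Hom A B) :
    T.wr (α - β) x = T.wr α x - T.wr β x :=
  (AddMonoidHom.mk' (fun γ => T.wr γ x) (fun γ γ' => T.wr_add_left γ γ' x)).map_sub α β

/-- Linearization of the vertical composite. -/
lemma vcomp_eq {A B : Obj} (α β : Trk A B) (h : T.src α = T.tgt β) :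
    T.vcomp α β = α + β - T.vid (T.tgt β) := by
  have h0 : T.src (α - T.vid (T.tgt β)) = 0 := by
    rw [src_sub, T.src_vid, h, sub_self]
  have key := T.interchange (T.vid (T.tgt β)) (α - T.vid (T.tgt β)) β (T.vid 0)
      (by rw [T.src_vid]) (by rw [h0, T.tgt_vid])
  rw [show T.vid (T.tgt β) + (α - T.vid (T.tgt β)) = α by abel] at key
  rw [vid_zero, add_zero] at key
  rw [T.vid_vcomp] at key
  rw [show (0 : Trk A B) = T.vid (T.src (α - T.vid (T.tgt β))) by rw [h0, vid_zero]] at key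
  rw [T.vcomp_vid] at key
  rw [key]; abel

/-- Linearization of the vertical inverse. -/
lemma vinv_eq {A B : Obj} (α : Trk A B) :
    T.vinv α = T.vid (T.src α) + T.vid (T.tgt α) - α := by
  have h := T.vcomp_vinv α
  rw [vcomp_eq T α (T.vinv α) (T.tgt_vinv α).symm, T.tgt_vinv] at h
  exact sub_helper h (by abel)

lemma gamma00 {A B : Obj} (a : Hom A B) : L.Γ a (0 : Hom A A) 0 = 0 := by
  have h := L.precomp a (0 : Hom A A) 0 (0 : Hom A A)
  rw [T.comp_zero, T.wr_zero, vid_zero] at h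
  exact h

lemma gamma_zero_left {A B : Obj} (a : Hom A B) (z : Hom A A) :
    L.Γ a 0 z = T.vid (T.comp a z) := by
  have h := L.assocΓ a 0 0 z
  rw [vcomp_eq T (L.Γ a 0 0 + T.vid (T.comp a z)) (L.Γ a (0 + 0) z)
        (by simp [T.src_add, L.src_Γ, T.src_vid, L.tgt_Γ, T.comp_zero]),
      vcomp_eq T (T.vid (T.comp a 0) + L.Γ a 0 z) (L.Γ a 0 (0 + z))
        (by simp [T.src_add, L.src_Γ, T.src_vid, L.tgt_Γ, T.comp_zero])] at h
  rw [gamma00] at h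
  simp only [L.tgt_Γ, T.comp_zero, vid_zero, zero_add, add_zero] at h
  exact (sub_helper h (by abel)).symm

lemma gamma_zero_right {A B : Obj} (a : Hom A B) (z : Hom A A) :
    L.Γ a z 0 = T.vid (T.comp a z) := by
  rw [L.symm, gamma_zero_left]

/-- The cocycle identity, linearized from `assocΓ`. -/
lemma cocycle {A B : Obj} (a : Hom A B) (x y z : Hom A A) :
    L.Γ a x y + L.Γ a (x + y) z - T.vid (T.comp a (x + y))
      = L.Γ a y z + L.Γ a x (y + z) - T.vid (T.comp a (y + z)) := by
  have h := L.assocΓ a x y z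
  rw [vcomp_eq T (L.Γ a x y + T.vid (T.comp a z)) (L.Γ a (x + y) z)
        (by rw [T.src_add, L.src_Γ, T.src_vid, L.tgt_Γ]),
      vcomp_eq T (T.vid (T.comp a x) + L.Γ a y z) (L.Γ a x (y + z))
        (by rw [T.src_add, L.src_Γ, T.src_vid, L.tgt_Γ]),
      L.tgt_Γ, L.tgt_Γ, T.vid_add, T.vid_add] at h
  exact sub_helper h (by abel)

lemma src_GN {A B : Obj} (a : Hom A B) : ∀ n : ℕ, T.src (GN T L a n) = T.comp a (n • T.one A)
  | 0 => by simp [GN, T.src_vid, T.comp_zero]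
  | 1 => by simp [GN, T.src_vid, one_smul, T.comp_one]
  | (n + 2) => by
      rw [show GN T L a (n + 2) = T.vcomp (GN T L a (n + 1) + T.vid (T.comp a (T.one A)))
            (L.Γ a ((n + 1) • T.one A) (T.one A)) from rfl]
      rw [T.src_vcomp _ _
        (by rw [T.src_add, src_GN a (n + 1), T.src_vid, L.tgt_Γ])]
      rw [L.src_Γ]
      congr 1
      exact (succ_nsmul (T.one A) (n + 1)).symm

lemma tgt_GN {A B : Obj} (a : Hom A B) : ∀ n : ℕ, T.tgt (GN T L a n) = n • a
  | 0 => by simp [GN, T.tgt_vid, zero_smul]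
  | 1 => by simp [GN, T.tgt_vid, one_smul]
  | (n + 2) => by
      rw [show GN T L a (n + 2) = T.vcomp (GN T L a (n + 1) + T.vid (T.comp a (T.one A)))
            (L.Γ a ((n + 1) • T.one A) (T.one A)) from rfl]
      rw [T.tgt_vcomp _ _
        (by rw [T.src_add, src_GN T L a (n + 1), T.src_vid, L.tgt_Γ])]
      rw [T.tgt_add, tgt_GN a (n + 1), T.tgt_vid, T.comp_one]
      exact (succ_nsmul a (n + 1)).symm

lemma GN_succ {A B : Obj} (a : Hom A B) (n : ℕ) :
    GN T L a (n + 1)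
      = GN T L a n + L.Γ a (n • T.one A) (T.one A) - T.vid (T.comp a (n • T.one A)) := by
  cases n with
  | zero =>
      simp [GN, zero_smul, T.comp_zero, vid_zero, gamma_zero_left, T.comp_one]
  | succ m =>
      rw [show GN T L a (m + 1 + 1) = T.vcomp (GN T L a (m + 1) + T.vid (T.comp a (T.one A)))
            (L.Γ a ((m + 1) • T.one A) (T.one A)) from rfl]
      rw [vcomp_eq T _ _
        (by rw [T.src_add, src_GN T L a (m + 1), T.src_vid, L.tgt_Γ])]
      rw [L.tgt_Γ, T.vid_add, T.comp_one]
      abel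

lemma src_Gneg1 {A B : Obj} (a : Hom A B) :
    T.src (Gneg1 T L a) = T.comp a (-(T.one A)) := by
  rw [Gneg1, T.src_vinv, tgt_sub, T.tgt_vid, L.tgt_Γ, T.comp_one]
  abel

lemma tgt_Gneg1 {A B : Obj} (a : Hom A B) : T.tgt (Gneg1 T L a) = -a := by
  rw [Gneg1, T.tgt_vinv, src_sub, T.src_vid, L.src_Γ]
  rw [show T.one A + -(T.one A) = 0 by abel, T.comp_zero]
  abel

lemma Gneg1_eq {A B : Obj} (a : Hom A B) :
    Gneg1 T L a = T.vid (T.comp a (-(T.one A))) - L.Γ a (T.one A) (-(T.one A)) := by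
  rw [Gneg1, vinv_eq, src_sub, tgt_sub, T.src_vid, T.tgt_vid, L.src_Γ, L.tgt_Γ,
    show T.one A + -(T.one A) = 0 by abel, T.comp_zero, T.comp_one, vid_sub, vid_sub,
    vid_zero, T.vid_add]
  abel

lemma wr_Gneg1 {A B : Obj} (a : Hom A B) (z : Hom A A) :
    T.wr (Gneg1 T L a) z = T.vid (T.comp a (-z)) - L.Γ a z (-z) := by
  rw [Gneg1_eq, wr_sub_left, T.wr_vid, T.comp_assoc, ← L.precomp a (T.one A) (-(T.one A)) z,
    comp_neg_left, T.one_comp]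

lemma GZ_ofNat {A B : Obj} (a : Hom A B) (n : ℕ) : GZ T L a (n : ℤ) = GN T L a n := by
  simp [GZ]

lemma GZ_negNat {A B : Obj} (a : Hom A B) (m : ℕ) :
    GZ T L a (-(m : ℤ))
      = -(GN T L a m) + (T.vid (T.comp a (-(m • T.one A))) - L.Γ a (m • T.one A) (-(m • T.one A)))
        + T.vid (T.comp a (m • T.one A)) := by
  cases m with
  | zero =>
      simp [GZ, GN, vid_zero, T.comp_zero, gamma00]
  | succ p =>
      have hneg : ¬ (0 : ℤ) ≤ -((p : ℤ) + 1) := by omega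
      rw [show ((p + 1 : ℕ) : ℤ) = (p : ℤ) + 1 by push_cast; ring]
      rw [GZ, if_neg hneg]
      have htn : (-(-((p : ℤ) + 1))).toNat = p + 1 := by omega
      rw [htn]
      rw [vcomp_eq T _ _
        (by rw [src_neg, src_GN, T.tgt_wr, tgt_Gneg1, comp_neg_left])]
      rw [T.tgt_wr, tgt_Gneg1, comp_neg_left, vid_neg, wr_Gneg1]
      abel

lemma natCast_smul_one {A : Obj} (n : ℕ) : ((n : ℤ)) • T.one A = n • T.one A :=
  natCast_zsmul _ _

lemma src_GZ {A B : Obj} (a : Hom A B) (k : ℤ) :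
    T.src (GZ T L a k) = T.comp a (k • T.one A) := by
  cases k with
  | ofNat n =>
      rw [Int.ofNat_eq_natCast, GZ_ofNat, src_GN, natCast_zsmul]
  | negSucc n =>
      rw [Int.negSucc_eq, show -((n : ℤ) + 1) = -(((n + 1 : ℕ) : ℤ)) by push_cast; ring,
        GZ_negNat, neg_zsmul, natCast_zsmul]
      rw [T.src_add, T.src_add, src_neg, src_sub, src_GN, T.src_vid, T.src_vid, L.src_Γ,
        show (n + 1) • T.one A + -((n + 1) • T.one A) = 0 by abel, T.comp_zero]
      abel

lemma Rplus {A B : Obj} (a : Hom A B) (k : ℤ) :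
    GZ T L a (k + 1)
      = GZ T L a k + L.Γ a (k • T.one A) (T.one A) - T.vid (T.comp a (k • T.one A)) := by
  cases k with
  | ofNat n =>
      rw [Int.ofNat_eq_natCast, show ((n : ℤ) + 1) = ((n + 1 : ℕ) : ℤ) by push_cast; ring,
        GZ_ofNat, GZ_ofNat, GN_succ, natCast_zsmul]
  | negSucc p =>
      rw [Int.negSucc_eq]
      rw [show -((p : ℤ) + 1) + 1 = -((p : ℕ) : ℤ) by ring]
      rw [show -((p : ℤ) + 1) = -(((p + 1 : ℕ)) : ℤ) by push_cast; ring]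
      rw [GZ_negNat, GZ_negNat, GN_succ T L a p, neg_zsmul, natCast_zsmul]
      have hc := cocycle T L a (p • T.one A) (T.one A) (-((p + 1) • T.one A))
      rw [show p • T.one A + T.one A = (p + 1) • T.one A from (succ_nsmul (T.one A) p).symm,
        show T.one A + -((p + 1) • T.one A) = -(p • T.one A) by rw [succ_nsmul]; abel,
        L.symm a (T.one A) (-((p + 1) • T.one A))] at hc
      exact sub_helper hc (by abel)

lemma Rminus {A B : Obj} (a : Hom A B) (k : ℤ) :
    GZ T L a (k - 1)
      = GZ T L a k + L.Γ a (k • T.one A) (-(T.one A)) - T.vid (T.comp a (k • T.one A))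
        - L.Γ a (T.one A) (-(T.one A)) := by
  have h := Rplus T L a (k - 1)
  rw [show k - 1 + 1 = k by ring] at h
  have hc := cocycle T L a (k • T.one A) (-(T.one A)) (T.one A)
  rw [show k • T.one A + -(T.one A) = (k - 1) • T.one A by
        rw [sub_zsmul, one_zsmul],
      show -(T.one A) + T.one A = 0 by abel,
      L.symm a (-(T.one A)) (T.one A), gamma_zero_right, T.comp_zero, vid_zero, sub_zero] at hc
  rw [h]
  exact sub_helper hc.symm (by abel)

lemma step_up {A B : Obj} (a : Hom A B) (m n : ℤ)
    (h : GZ T L a (m + n)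
        = GZ T L a m + GZ T L a n + L.Γ a (m • T.one A) (n • T.one A)
          - T.vid (T.comp a (m • T.one A)) - T.vid (T.comp a (n • T.one A))) :
    GZ T L a (m + (n + 1))
      = GZ T L a m + GZ T L a (n + 1) + L.Γ a (m • T.one A) ((n + 1) • T.one A)
        - T.vid (T.comp a (m • T.one A)) - T.vid (T.comp a ((n + 1) • T.one A)) := by
  rw [show m + (n + 1) = (m + n) + 1 by ring, Rplus T L a (m + n), h, Rplus T L a n]
  have hc := cocycle T L a (m • T.one A) (n • T.one A) (T.one A)
  rw [show m • T.one A + n • T.one A = (m + n) • T.one A by rw [add_zsmul],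
      show n • T.one A + T.one A = (n + 1) • T.one A by rw [add_zsmul, one_zsmul]] at hc
  exact sub_helper hc (by abel)

lemma step_down {A B : Obj} (a : Hom A B) (m n : ℤ)
    (h : GZ T L a (m + n)
        = GZ T L a m + GZ T L a n + L.Γ a (m • T.one A) (n • T.one A)
          - T.vid (T.comp a (m • T.one A)) - T.vid (T.comp a (n • T.one A))) :
    GZ T L a (m + (n - 1))
      = GZ T L a m + GZ T L a (n - 1) + L.Γ a (m • T.one A) ((n - 1) • T.one A)
        - T.vid (T.comp a (m • T.one A)) - T.vid (T.comp a ((n - 1) • T.one A)) := by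
  rw [show m + (n - 1) = (m + n) - 1 by ring, Rminus T L a (m + n), h, Rminus T L a n]
  have hc := cocycle T L a (m • T.one A) (n • T.one A) (-(T.one A))
  rw [show m • T.one A + n • T.one A = (m + n) • T.one A by rw [add_zsmul],
      show n • T.one A + -(T.one A) = (n - 1) • T.one A by
        rw [sub_zsmul, one_zsmul]] at hc
  exact sub_helper hc (by abel)

lemma GZ_add {A B : Obj} (a : Hom A B) (m n : ℤ) :
    GZ T L a (m + n)
      = GZ T L a m + GZ T L a n + L.Γ a (m • T.one A) (n • T.one A)
        - T.vid (T.comp a (m • T.one A)) - T.vid (T.comp a (n • T.one A)) := by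
  induction n using Int.induction_on with
  | zero =>
      rw [add_zero, zero_zsmul, gamma_zero_right,
        show GZ T L a 0 = 0 by simp [GZ, GN, vid_zero T],
        T.comp_zero, vid_zero]
      abel
  | succ i ih => exact step_up T L a m i ih
  | pred i ih => exact step_down T L a m (-(i : ℤ)) ih

end Stmt18Aux
/-- For all `m, n ∈ ℤ` (allowing negatives), the addition
formula `Γ(m+n)_a = (Γ(m)_a + Γ(n)_a) ∘ Γ_a^{m,n}` holds, where
`Γ_a^{m,n} = Γ_a^{m·1_A, n·1_A}`. -/
theorem stmt18 {Obj : Type u} {Hom : Obj → Obj → Type v} {Trk : Obj → Obj → Type w}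
    [∀ A B : Obj, AddCommGroup (Hom A B)] [∀ A B : Obj, AddCommGroup (Trk A B)]
    (T : LLTrackCat Obj Hom Trk) (L : LinTracks T)
    {A B : Obj} (a : Hom A B) (m n : ℤ) :
    GZ T L a (m + n)
      = T.vcomp (GZ T L a m + GZ T L a n) (L.Γ a (m • T.one A) (n • T.one A)) := by
  rw [vcomp_eq T _ _ (by rw [T.src_add, src_GZ, src_GZ, L.tgt_Γ]),
    L.tgt_Γ, T.vid_add, GZ_add]
  abel
end
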